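/- arXiv:2010.14747 — 3 statements merged into one kernel-verified Lean document; each statement's English description precedes it below -/
import Mathlib

section
/- Let G be a commutative group (written multiplicatively), g : G, and ι a finite index set of attributes. Suppose the system secret shares a, s : ι → ℤ satisfy a i + s i = K for every i (master-secret splitting), and the receiver's key shares a_U, s_U : ι → ℤ satisfy a_U i + s_U i = K for every i. Let σ : ι ≃ ι be the shuffle permutation, r, ω : ℤ the encryption randomness and time key, p : ι → G the message tuples, I_r a finset of receiver attribute indices, and Î_r := image of I_r under σ⁻¹. Set A := g^r, D := g^(r·ω), B'ᵢ := p(σ i) * g^(a(σ i)·r) * g^(s i·r), AK := (∑_{i ∈ I_r} a_U i) + ω, RK := ∑_{i ∈ I_r} s_U i. Then the ProxyDecrypt1 output satisfies D * (∏_{i ∈ Î_r} B'ᵢ) * A^(−(AK + RK)) = (∏_{j ∈ I_r} p j) * g^(r·((∑_{i ∈ Î_r} s i) − (∑_{j ∈ I_r} s j))). -/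
/-- Correctness identity of the `ProxyDecrypt1` algorithm of the EABEHP scheme:
given master-secret splitting `a i + s i = K` and receiver key splitting
`a_U i + s_U i = K`, the partial decryption
`D * (∏ i in Î_r, B' i) * A ^ (-(AK + RK))` equals the product of the
receiver's message tuples blinded by
`g ^ (r * ((∑ i in Î_r, s i) - (∑ j in I_r, s j)))`. -/
theorem eabehp_proxyDecrypt1_correctness
    {G : Type*} [CommGroup G] (g : G)
    {ι : Type*} [Fintype ι] [DecidableEq ι]
    (a s aU sU : ι → ℤ) (K : ℤ)
    (hK : ∀ i, a i + s i = K) (hKU : ∀ i, aU i + sU i = K)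
    (σ : Equiv.Perm ι) (r ω : ℤ) (p : ι → G) (Ir : Finset ι)
    (Ihat : Finset ι) (hIhat : Ihat = Ir.image σ.symm)
    (A D : G) (hA : A = g ^ r) (hD : D = g ^ (r * ω))
    (B' : ι → G)
    (hB' : ∀ i, B' i = p (σ i) * g ^ (a (σ i) * r) * g ^ (s i * r))
    (AK RK : ℤ)
    (hAK : AK = (∑ i ∈ Ir, aU i) + ω) (hRK : RK = ∑ i ∈ Ir, sU i) :
    D * (∏ i ∈ Ihat, B' i) * A ^ (-(AK + RK)) =
      (∏ j ∈ Ir, p j) *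
        g ^ (r * ((∑ i ∈ Ihat, s i) - (∑ j ∈ Ir, s j))) := by
  subst hIhat hA hD hAK hRK
  have hinj : ∀ x ∈ Ir, ∀ y ∈ Ir, σ.symm x = σ.symm y → x = y :=
    fun x _ y _ h => σ.symm.injective h
  rw [Finset.prod_image hinj, Finset.sum_image hinj]
  simp only [hB', Equiv.apply_symm_apply, Finset.prod_mul_distrib]
  clear hinj hB'
  have hprod : ∀ f : ι → ℤ, ∏ x ∈ Ir, g ^ (f x) = g ^ (∑ x ∈ Ir, f x) := by
    intro f
    induction Ir using Finset.cons_induction with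
    | empty => simp
    | cons c t hc ih => rw [Finset.prod_cons, Finset.sum_cons, ih, zpow_add]
  rw [hprod, hprod, ← zpow_mul]
  have h3 : (∑ j ∈ Ir, a j) + (∑ j ∈ Ir, s j) = Ir.card * K := by
    rw [← Finset.sum_add_distrib]
    simp [hK, Finset.sum_const, mul_comm]
  have h4 : (∑ j ∈ Ir, aU j) + (∑ j ∈ Ir, sU j) = Ir.card * K := by
    rw [← Finset.sum_add_distrib]
    simp [hKU, Finset.sum_const, mul_comm]
  have hE : r * ((∑ x ∈ Ir, s (σ.symm x)) - ∑ j ∈ Ir, s j) =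
      r * ω + (∑ x ∈ Ir, (a x * r)) + (∑ x ∈ Ir, (s (σ.symm x) * r)) +
        r * (-((∑ i ∈ Ir, aU i) + ω + ∑ i ∈ Ir, sU i)) := by
    rw [← Finset.sum_mul, ← Finset.sum_mul]
    linear_combination (-r) * h3 + r * h4
  rw [hE, zpow_add, zpow_add, zpow_add]
  simp only [mul_comm, mul_left_comm, mul_assoc]
end

section
/- Let G be a commutative group (written multiplicatively), g : G, and ι a finite index set of attributes. Suppose a, s : ι → ℤ satisfy a i + s i = K for every i, and a_U, s_U : ι → ℤ satisfy a_U i + s_U i = K for every i. Let σ : ι ≃ ι be a permutation, r, ω : ℤ, p : ι → G, I_r a finset of ι, Î_r := image of I_r under σ⁻¹, A := g^r, D := g^(r·ω), B'ᵢ := p(σ i) * g^(a(σ i)·r) * g^(s i·r), AK := (∑_{i ∈ I_r} a_U i) + ω, RK := ∑_{i ∈ I_r} s_U i. Then the ProxyDecrypt2 output satisfies (D * (∏_{i ∈ Î_r} B'ᵢ) * A^(−(AK + RK))) * (∏_{j ∈ I_r} g^(r·(s j))) * (∏_{i ∈ Î_r} g^(r·(s i)))⁻¹ = ∏_{j ∈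 I_r} p j; that is, applying the decryption materials AM = {g^{r·s i}} to the partially decrypted ciphertext exactly cancels the blinding factor g^{r·(∑_{i∈Î_r} s i − ∑_{j∈I_r} s j)} and recovers the product of the receiver's message tuples. -/
private lemma prod_gzpow {G : Type*} [CommGroup G] {ι : Type*} (g : G)
    (t : Finset ι) (f : ι → ℤ) : ∏ i ∈ t, g ^ f i = g ^ (∑ i ∈ t, f i) := by
  induction t using Finset.cons_induction with
  | empty => simp
  | cons a t ha ih => simp [Finset.prod_cons, Finset.sum_cons, ih, zpow_add]

/-- Correctness identity of the `ProxyDecrypt2` algorithm of the EABEHP scheme: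
applying the decryption materials `AM = {g ^ (r * s i)}` to the partially
decrypted ciphertext produced by `ProxyDecrypt1` exactly cancels the blinding
factor and recovers the product of the receiver's message tuples. -/
theorem eabehp_proxyDecrypt2_correctness
    {G : Type*} [CommGroup G] (g : G)
    {ι : Type*} [Fintype ι] [DecidableEq ι]
    (a s aU sU : ι → ℤ) (K : ℤ)
    (hK : ∀ i, a i + s i = K) (hKU : ∀ i, aU i + sU i = K)
    (σ : Equiv.Perm ι) (r ω : ℤ) (p : ι → G) (Ir : Finset ι)
    (Ihat : Finset ι) (hIhat : Ihat = Ir.image σ.symm)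
    (A D : G) (hA : A = g ^ r) (hD : D = g ^ (r * ω))
    (B' : ι → G)
    (hB' : ∀ i, B' i = p (σ i) * g ^ (a (σ i) * r) * g ^ (s i * r))
    (AK RK : ℤ)
    (hAK : AK = (∑ i ∈ Ir, aU i) + ω) (hRK : RK = ∑ i ∈ Ir, sU i) :
    (D * (∏ i ∈ Ihat, B' i) * A ^ (-(AK + RK))) *
        (∏ j ∈ Ir, g ^ (r * s j)) * (∏ i ∈ Ihat, g ^ (r * s i))⁻¹ =
      ∏ j ∈ Ir, p j := by
  subst hIhat hA hD hAK hRK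
  have hinj : ∀ x ∈ Ir, ∀ y ∈ Ir, σ.symm x = σ.symm y → x = y := by
    intro x _ y _ h; exact σ.symm.injective h
  rw [Finset.prod_image hinj, Finset.prod_image hinj]
  simp only [hB', Equiv.apply_symm_apply, Finset.prod_mul_distrib, prod_gzpow,
    ← zpow_mul]
  have h1 : ∑ j ∈ Ir, (aU j + sU j) = ∑ j ∈ Ir, K := by
    exact Finset.sum_congr rfl fun j _ => hKU j
  have h2 : ∑ j ∈ Ir, (a j + s j) = ∑ j ∈ Ir, K := by
    exact Finset.sum_congr rfl fun j _ => hK j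
  rw [Finset.sum_add_distrib] at h1 h2
  rw [mul_inv_eq_iff_eq_mul]
  group
  rw [mul_comm (g ^ (r * ω)), mul_assoc, ← zpow_add g]
  congr 2
  simp only [← Finset.mul_sum]
  linear_combination r * h2 - r * h1
end

section
/- Let G be a commutative group (written multiplicatively), g : G, and ι a finite index set of attributes. Suppose a, s : ι → ℤ satisfy a i + s i = K for every i, and a_U, s_U : ι → ℤ satisfy a_U i + s_U i = K for every i. Let σ : ι ≃ ι be a permutation, r, ω : ℤ, I_r a finset of ι, Î_r := image of I_r under σ⁻¹. Let T : ι → ℤ be a policy with T i ∈ {−1, 0, 1} for all i, and let the message tuples p : ι → G satisfy: p i = 1 whenever T i = 0, and ∏_{i : T i = 1} p i = M for a message M : G. Assume the receiver satisfies the policy: {i | T i = 1} ⊆ I_r and no i ∈ I_r has T i = −1. Set A := g^r, D := g^(r·ω), B'ᵢ := p(σ i) * g^(a(σ i)·r) * g^(s i·r), AK := (∑_{i ∈ I_r} a_U i) + ω, RK := ∑_{i ∈ I_r} s_U i. Then the full decryption pipeline recovers the message: (D * (∏_{i ∈ Î_r} B'ᵢ) * A^(−(AK + RK))) * (∏_{j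 ∈ I_r} g^(r·(s j))) * (∏_{i ∈ Î_r} g^(r·(s i)))⁻¹ = M. -/
lemma eabehp_prod_zpow {G : Type*} [CommGroup G] (g : G)
    {ι : Type*} (t : Finset ι) (f : ι → ℤ) :
    ∏ i ∈ t, g ^ f i = g ^ ∑ i ∈ t, f i := by
  induction t using Finset.cons_induction with
  | empty => simp
  | cons a s ha ih => rw [Finset.prod_cons, Finset.sum_cons, ih, zpow_add]

/-- End-to-end correctness of the EABEHP scheme: a receiver whose attribute
set `I_r` satisfies the encryption policy `T` (every required attribute is
possessed and no unrequired attribute is possessed) recovers the plaintext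
message `M` through the full decryption pipeline. -/
theorem eabehp_full_decryption_correctness
    {G : Type*} [CommGroup G] (g : G)
    {ι : Type*} [Fintype ι] [DecidableEq ι]
    (a s aU sU : ι → ℤ) (K : ℤ)
    (hK : ∀ i, a i + s i = K) (hKU : ∀ i, aU i + sU i = K)
    (σ : Equiv.Perm ι) (r ω : ℤ) (Ir : Finset ι)
    (Ihat : Finset ι) (hIhat : Ihat = Ir.image σ.symm)
    (T : ι → ℤ) (hT : ∀ i, T i = -1 ∨ T i = 0 ∨ T i = 1)
    (p : ι → G) (M : G)
    (hp0 : ∀ i, T i = 0 → p i = 1)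
    (hpM : ∏ i ∈ Finset.univ.filter (fun i => T i = 1), p i = M)
    (hreq : Finset.univ.filter (fun i => T i = 1) ⊆ Ir)
    (hunreq : ∀ i ∈ Ir, T i ≠ -1)
    (A D : G) (hA : A = g ^ r) (hD : D = g ^ (r * ω))
    (B' : ι → G)
    (hB' : ∀ i, B' i = p (σ i) * g ^ (a (σ i) * r) * g ^ (s i * r))
    (AK RK : ℤ)
    (hAK : AK = (∑ i ∈ Ir, aU i) + ω) (hRK : RK = ∑ i ∈ Ir, sU i) :
    (D * (∏ i ∈ Ihat, B' i) * A ^ (-(AK + RK))) *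
        (∏ j ∈ Ir, g ^ (r * s j)) * (∏ i ∈ Ihat, g ^ (r * s i))⁻¹ =
      M := by
  classical
  subst hIhat hA hD hAK hRK
  have hpIr : ∏ j ∈ Ir, p j = M := by
    rw [← hpM]
    refine (Finset.prod_subset hreq ?_).symm
    intro x hx hnx
    apply hp0
    rcases hT x with h | h | h
    · exact absurd h (hunreq x hx)
    · exact h
    · exact absurd (Finset.mem_filter.mpr ⟨Finset.mem_univ x, h⟩) hnx
  have himg : ∀ (f : ι → G), ∏ i ∈ Ir.image σ.symm, f i = ∏ j ∈ Ir, f (σ.symm j) :=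
    fun f => Finset.prod_image (fun x _ y _ h => σ.symm.injective h)
  simp only [hB']
  rw [Finset.prod_mul_distrib, himg, himg]
  simp only [Equiv.apply_symm_apply]
  rw [Finset.prod_mul_distrib, hpIr]
  rw [eabehp_prod_zpow, eabehp_prod_zpow, eabehp_prod_zpow, eabehp_prod_zpow,
    ← zpow_mul, ← zpow_neg,
    Finset.sum_image (fun x _ y _ h => σ.symm.injective h)]
  have key : ∀ (x y z w u v : ℤ),
      g ^ x * ((M * g ^ y) * g ^ z) * g ^ w * g ^ u * g ^ v
        = M * g ^ (x + y + z + w + u + v) := by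
    intros; simp [zpow_add, mul_assoc, mul_comm, mul_left_comm]
  rw [key]
  have hsum : ∑ j ∈ Ir, a j + ∑ j ∈ Ir, s j = ∑ j ∈ Ir, aU j + ∑ j ∈ Ir, sU j := by
    rw [← Finset.sum_add_distrib, ← Finset.sum_add_distrib]
    exact Finset.sum_congr rfl fun i _ => by rw [hK, hKU]
  have hcan : ∑ i ∈ Ir, s ((Equiv.symm σ) i) * r = ∑ i ∈ Ir, r * s ((Equiv.symm σ) i) :=
    Finset.sum_congr rfl fun i _ => mul_comm _ _
  have hz : r * ω + (∑ i ∈ Ir, a i * r) + (∑ i ∈ Ir, s ((Equiv.symm σ) i) * r)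
      + r * -(∑ i ∈ Ir, aU i + ω + ∑ i ∈ Ir, sU i) + (∑ i ∈ Ir, r * s i)
      + -∑ i ∈ Ir, r * s ((Equiv.symm σ) i) = 0 := by
    simp only [hcan, ← Finset.sum_mul, ← Finset.mul_sum]
    linear_combination r * hsum
  rw [hz, zpow_zero, mul_one]
end
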